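/- arXiv:2007.00057 — 3 statements merged into one kernel-verified Lean document; each statement's English description precedes it below -/
import Mathlib

section
/- For all k ≥ 1 and ℓ ≥ 1, there are only finitely many k-vertex-critical (P_2 + ℓP_1)-free graphs (up to isomorphism); equivalently, there is a bound N(k, ℓ) such that every such graph has at most N(k, ℓ) vertices. -/
open SimpleGraph

/-- `G` is `k`-vertex-critical: `χ(G) = k` and deleting any vertex decreases `χ`. -/
def IsKVertexCritical {V : Type*} (G : SimpleGraph V) (k : ℕ) : Prop :=
  G.chromaticNumber = k ∧ ∀ v : V, (G.induce ({v}ᶜ : Set V)).chromaticNumber < k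

/-- `G` has no induced subgraph isomorphic to `H`. -/
def InducedFree {V W : Type*} (G : SimpleGraph V) (H : SimpleGraph W) : Prop :=
  ∀ s : Set V, IsEmpty (G.induce s ≃g H)

/-- `s` is an independent set of `G`. -/
def IsIndepSet {V : Type*} (G : SimpleGraph V) (s : Set V) : Prop :=
  s.Pairwise fun a b => ¬ G.Adj a b

/-- The graph `P_2 + ℓ P_1`: an edge together with `ℓ` isolated vertices. -/
def P2lP1 (ℓ : ℕ) : SimpleGraph (Fin (ℓ + 2)) := fromEdgeSet {s(0, 1)}

/-- The graph `P_3 + P_1`: a path on three vertices plus an isolated vertex. -/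
def P3P1 : SimpleGraph (Fin 4) := fromEdgeSet {s(0, 1), s(1, 2)}

/-- The paw: a triangle with a pendant vertex. -/
def paw : SimpleGraph (Fin 4) := fromEdgeSet {s(0, 1), s(0, 2), s(1, 2), s(2, 3)}

/-- The join of two graphs: all edges between the two sides are added. -/
def joinG {α β : Type*} (G : SimpleGraph α) (H : SimpleGraph β) : SimpleGraph (α ⊕ β) where
  Adj x y :=
    match x, y with
    | Sum.inl a, Sum.inl b => G.Adj a b
    | Sum.inr a, Sum.inr b => H.Adj a b
    | Sum.inl _, Sum.inr _ => True
    | Sum.inr _, Sum.inl _ => True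
  symm := by
    constructor
    rintro (a | a) (b | b) h
    · exact G.adj_symm h
    · trivial
    · trivial
    · exact H.adj_symm h
  loopless := by
    constructor
    rintro (a | a) h
    · exact G.irrefl h
    · exact H.irrefl h

private lemma P2lP1_adj {ℓ : ℕ} (i j : Fin (ℓ + 2)) :
    (P2lP1 ℓ).Adj i j ↔ (i = 0 ∧ j = 1) ∨ (i = 1 ∧ j = 0) := by
  have h01 : (0 : Fin (ℓ + 2)) ≠ 1 := by
    intro h
    have := congrArg Fin.val h
    simp at this
  show (fromEdgeSet {s(0, 1)}).Adj i j ↔ _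
  rw [fromEdgeSet_adj, Set.mem_singleton_iff, Sym2.eq_iff]
  constructor
  · exact fun h => h.1
  · rintro (⟨rfl, rfl⟩ | ⟨rfl, rfl⟩)
    · exact ⟨Or.inl ⟨rfl, rfl⟩, h01⟩
    · exact ⟨Or.inr ⟨rfl, rfl⟩, h01.symm⟩

private lemma no_config {V : Type} {G : SimpleGraph V} {ℓ : ℕ}
    (hfree : InducedFree G (P2lP1 ℓ)) {v a : V} (hva : G.Adj v a)
    (t : Fin ℓ → V) (htinj : Function.Injective t)
    (hv : ∀ i, ¬ G.Adj v (t i)) (ha : ∀ i, ¬ G.Adj a (t i))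
    (htt : ∀ i j, ¬ G.Adj (t i) (t j))
    (hnv : ∀ i, t i ≠ v) (hna : ∀ i, t i ≠ a) : False := by
  have h01 : (0 : Fin (ℓ + 2)) ≠ 1 := by
    intro h
    have := congrArg Fin.val h
    simp at this
  have hB : ∀ j : Fin ℓ, (j.succ.succ : Fin (ℓ + 2)) ≠ 0 := fun j => Fin.succ_ne_zero _
  have hD : ((0 : Fin (ℓ + 1)).succ : Fin (ℓ + 2)) = 1 := Fin.succ_zero_eq_one
  have hC : ∀ j : Fin ℓ, (j.succ.succ : Fin (ℓ + 2)) ≠ 1 := by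
    intro j h
    rw [← hD] at h
    exact Fin.succ_ne_zero j (Fin.succ_injective _ h)
  have h10 : (1 : Fin (ℓ + 2)) ≠ 0 := Ne.symm h01
  have hav : G.Adj a v := hva.symm
  have hv2 : ∀ i, ¬ G.Adj (t i) v := fun i h => hv i (G.adj_symm h)
  have ha2 : ∀ i, ¬ G.Adj (t i) a := fun i h => ha i (G.adj_symm h)
  set f : Fin (ℓ + 2) → V := Fin.cons v (Fin.cons a t) with hf
  have hinj2 : Function.Injective (Fin.cons a t : Fin (ℓ + 1) → V) := by
    rw [Fin.cons_injective_iff]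
    refine ⟨?_, htinj⟩
    rintro ⟨i, hi⟩
    exact hna i hi
  have hfinj : Function.Injective f := by
    rw [hf, Fin.cons_injective_iff]
    refine ⟨?_, hinj2⟩
    rintro ⟨i, hi⟩
    induction i using Fin.cases with
    | zero =>
      rw [Fin.cons_zero] at hi
      exact G.ne_of_adj hva hi.symm
    | succ i =>
      rw [Fin.cons_succ] at hi
      exact hnv i hi
  have hadj : ∀ i j : Fin (ℓ + 2), G.Adj (f i) (f j) ↔ (P2lP1 ℓ).Adj i j := by
    intro i j
    rw [P2lP1_adj]
    induction i using Fin.cases with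
    | zero =>
      induction j using Fin.cases with
      | zero => simp [hf, h01]
      | succ j =>
        induction j using Fin.cases with
        | zero => simp [hf, hva, hD, h01]
        | succ j => simp [hf, hv j, hC j, h01]
    | succ i =>
      induction i using Fin.cases with
      | zero =>
        induction j using Fin.cases with
        | zero => simp [hf, hD, h01, h10, hav]
        | succ j =>
          induction j using Fin.cases with
          | zero => simp [hf, hD, h10]
          | succ j => simp [hf, hD, ha j, hB j, h10]
      | succ i =>
        induction j using Fin.cases with
        | zero =>
          simp [hf, hB i, hC i, hv2 i]
        | succ j =>
          induction j using Fin.cases with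
          | zero => simp [hf, hD, hB i, hC i, ha2 i]
          | succ j => simp [hf, hB i, hC i, hB j, hC j, htt i j]
  have hiso : G.induce (Set.range f) ≃g P2lP1 ℓ := by
    refine ⟨(Equiv.ofInjective f hfinj).symm, ?_⟩
    rintro ⟨x, i, rfl⟩ ⟨y, j, rfl⟩
    have e1 : (Equiv.ofInjective f hfinj).symm ⟨f i, ⟨i, rfl⟩⟩ = i := by
      rw [Equiv.symm_apply_eq]
      rfl
    have e2 : (Equiv.ofInjective f hfinj).symm ⟨f j, ⟨j, rfl⟩⟩ = j := by
      rw [Equiv.symm_apply_eq]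
      rfl
    rw [show ((⟨f i, ⟨i, rfl⟩⟩ : Set.range f)) = (⟨f i, Set.mem_range_self i⟩ : Set.range f) from rfl]
    simp only [RelIso.coe_fn_mk, e1, e2, SimpleGraph.comap_adj]
    exact (hadj i j).symm
  exact (hfree (Set.range f)).false hiso

private lemma indep_card_le {V : Type} [Fintype V] {G : SimpleGraph V} {k ℓ : ℕ}
    (hk : 1 ≤ k) (hℓ : 1 ≤ ℓ) (hcrit : IsKVertexCritical G k)
    (hfree : InducedFree G (P2lP1 ℓ))
    (S : Finset V) (hS : ∀ x ∈ S, ∀ y ∈ S, x ≠ y → ¬ G.Adj x y) :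
    S.card ≤ (k - 1) * (ℓ - 1) + 1 := by
  classical
  rcases S.eq_empty_or_nonempty with rfl | ⟨v, hv⟩
  · simp
  obtain ⟨hchrom, hdel⟩ := hcrit
  have hcol : (G.induce ({v}ᶜ : Set V)).Colorable (k - 1) := by
    rw [← SimpleGraph.chromaticNumber_le_iff_colorable]
    have h := hdel v
    have hcast : ((k - 1 : ℕ) : ℕ∞) + 1 = (k : ℕ∞) := by
      norm_cast
      omega
    rw [← hcast] at h
    exact (ENat.lt_add_one_iff (by simp)).mp h
  obtain ⟨c⟩ := hcol
  have hnb : ∀ i : Fin (k - 1), ∃ a, ∃ h : a ∈ ({v}ᶜ : Set V), G.Adj v a ∧ c ⟨a, h⟩ = i := by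
    by_contra hcon
    push_neg at hcon
    obtain ⟨i₀, hi₀⟩ := hcon
    have hGcol : G.Colorable (k - 1) := by
      refine ⟨SimpleGraph.Coloring.mk (fun w => if h : w = v then i₀ else c ⟨w, h⟩) ?_⟩
      intro x y hxy
      by_cases hx : x = v <;> by_cases hy : y = v
      · exact absurd (hx ▸ hy ▸ hxy) (G.irrefl)
      · subst hx
        rw [dif_pos rfl, dif_neg hy]
        exact fun hh => hi₀ y hy hxy hh.symm
      · subst hy
        rw [dif_neg hx, dif_pos rfl]
        exact hi₀ x hx hxy.symm
      · rw [dif_neg hx, dif_neg hy]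
        exact c.valid hxy
    have h2 := hGcol.chromaticNumber_le
    rw [hchrom] at h2
    have h3 : (k : ℕ) ≤ k - 1 := by exact_mod_cast h2
    omega
  have key : ∀ i : Fin (k - 1),
      ((S.erase v).filter (fun s => ∃ h : s ∈ ({v}ᶜ : Set V), c ⟨s, h⟩ = i)).card ≤ ℓ - 1 := by
    intro i
    by_contra hbig
    push_neg at hbig
    have hcard : ℓ ≤ ((S.erase v).filter
        (fun s => ∃ h : s ∈ ({v}ᶜ : Set V), c ⟨s, h⟩ = i)).card := by omega
    obtain ⟨T, hTsub, hTcard⟩ := Finset.exists_subset_card_eq hcard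
    obtain ⟨a, hamem, havadj, hca⟩ := hnb i
    set t : Fin ℓ → V := fun idx => ((T.equivFin).symm (Fin.cast hTcard.symm idx) : V) with ht
    have htmem : ∀ idx, t idx ∈ T := fun idx => ((T.equivFin).symm (Fin.cast hTcard.symm idx)).2
    have htinj : Function.Injective t := by
      intro i1 i2 h
      have h1 := Subtype.coe_injective h
      have h2 := (T.equivFin).symm.injective h1
      exact Fin.cast_injective _ h2
    have hprops : ∀ idx, t idx ∈ S ∧ t idx ≠ v ∧
        ∃ h : t idx ∈ ({v}ᶜ : Set V), c ⟨t idx, h⟩ = i := by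
      intro idx
      have := hTsub (htmem idx)
      rw [Finset.mem_filter, Finset.mem_erase] at this
      exact ⟨this.1.2, this.1.1, this.2⟩
    have hnv : ∀ idx, t idx ≠ v := fun idx => (hprops idx).2.1
    have hvS : v ∈ S := hv
    have hv' : ∀ idx, ¬ G.Adj v (t idx) := fun idx =>
      hS v hvS (t idx) (hprops idx).1 (fun he => (hnv idx) he.symm)
    have hna : ∀ idx, t idx ≠ a := fun idx h => hv' idx (h ▸ havadj)
    have ha' : ∀ idx, ¬ G.Adj a (t idx) := by
      intro idx hAdj
      obtain ⟨h, hc⟩ := (hprops idx).2.2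
      exact c.valid (show (G.induce ({v}ᶜ : Set V)).Adj ⟨a, hamem⟩ ⟨t idx, h⟩ from hAdj)
        (by rw [hca, hc])
    have htt : ∀ i1 i2, ¬ G.Adj (t i1) (t i2) := by
      intro i1 i2 hAdj
      exact hS _ (hprops i1).1 _ (hprops i2).1 (G.ne_of_adj hAdj) hAdj
    exact no_config hfree havadj t htinj hv' ha' htt hnv hna
  rcases Nat.lt_or_ge k 2 with h2 | h2
  · -- k = 1
    have hk1 : k = 1 := by omega
    subst hk1
    have hsub : S ⊆ {v} := by
      intro s hs
      rw [Finset.mem_singleton]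
      by_contra hsv
      exact Fin.elim0 (c ⟨s, hsv⟩)
    have := Finset.card_le_card hsub
    simp only [Finset.card_singleton] at this
    omega
  · have i0 : Fin (k - 1) := ⟨0, by omega⟩
    have herase : (S.erase v).card ≤ (k - 1) * (ℓ - 1) := by
      have hmap : ∀ s ∈ S.erase v,
          (fun s => if h : s = v then i0 else c ⟨s, h⟩) s ∈ (Finset.univ : Finset (Fin (k - 1))) :=
        fun _ _ => Finset.mem_univ _
      rw [Finset.card_eq_sum_card_fiberwise hmap]
      calc ∑ i : Fin (k - 1), ((S.erase v).filter
              (fun s => (if h : s = v then i0 else c ⟨s, h⟩) = i)).card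
          ≤ ∑ _i : Fin (k - 1), (ℓ - 1) := by
            refine Finset.sum_le_sum ?_
            intro i _
            refine le_trans (Finset.card_le_card ?_) (key i)
            intro s hs
            rw [Finset.mem_filter] at hs ⊢
            obtain ⟨hs1, hs2⟩ := hs
            have hsv : s ≠ v := (Finset.mem_erase.mp hs1).1
            rw [dif_neg hsv] at hs2
            exact ⟨hs1, hsv, hs2⟩
        _ = (k - 1) * (ℓ - 1) := by
            rw [Finset.sum_const, Finset.card_univ, Fintype.card_fin, smul_eq_mul]
    have hce : (S.erase v).card = S.card - 1 := Finset.card_erase_of_mem hv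
    have hpos : 1 ≤ S.card := Finset.card_pos.mpr ⟨v, hv⟩
    omega

theorem finitely_many_vertex_critical_P2lP1_free (k ℓ : ℕ) (hk : 1 ≤ k) (hℓ : 1 ≤ ℓ) :
    ∃ N : ℕ, ∀ (V : Type) [Fintype V] (G : SimpleGraph V),
      IsKVertexCritical G k → InducedFree G (P2lP1 ℓ) → Fintype.card V ≤ N := by
  classical
  refine ⟨k * ((k - 1) * (ℓ - 1) + 1), ?_⟩
  intro V _ G hcrit hfree
  have hcolk : G.Colorable k :=
    SimpleGraph.chromaticNumber_le_iff_colorable.mp (le_of_eq hcrit.1)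
  obtain ⟨C⟩ := hcolk
  have hfib : ∀ w ∈ (Finset.univ : Finset V), C w ∈ (Finset.univ : Finset (Fin k)) :=
    fun _ _ => Finset.mem_univ _
  calc Fintype.card V
      = ∑ i : Fin k, ((Finset.univ : Finset V).filter fun w => C w = i).card := by
        rw [← Finset.card_univ, Finset.card_eq_sum_card_fiberwise hfib]
    _ ≤ ∑ _i : Fin k, ((k - 1) * (ℓ - 1) + 1) := by
        refine Finset.sum_le_sum ?_
        intro i _
        refine indep_card_le hk hℓ hcrit hfree _ ?_
        intro x hx y hy hne hAdj
        rw [Finset.mem_filter] at hx hy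
        exact C.valid hAdj (hx.2.trans hy.2.symm)
    _ = k * ((k - 1) * (ℓ - 1) + 1) := by
        rw [Finset.sum_const, Finset.card_univ, Fintype.card_fin, smul_eq_mul]
end

section
/- A graph G is paw-free if and only if every connected component of G is triangle-free or complete multipartite. -/
open SimpleGraph

/-- A graph is complete multipartite if its vertices can be partitioned into classes such
that two vertices are adjacent exactly when they lie in distinct classes. -/
def IsCompleteMultipartite {W : Type} (G : SimpleGraph W) : Prop :=
  ∃ (ι : Type) (f : W → ι), ∀ x y : W, G.Adj x y ↔ f x ≠ f y

def NoPaw {V : Type} (G : SimpleGraph V) : Prop :=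
  ∀ a b c d : V, G.Adj a b → G.Adj a c → G.Adj b c → G.Adj c d →
    ¬G.Adj a d → ¬G.Adj b d → a ≠ d → b ≠ d → False

lemma lemA {V : Type} {G : SimpleGraph V} (h : NoPaw G) {x y z w : V}
    (hxy : G.Adj x y) (hxz : G.Adj x z) (hyz : G.Adj y z) (hwx : G.Adj w x) :
    G.Adj w y ∨ G.Adj w z := by
  by_cases hwy : w = y
  · exact Or.inr (hwy ▸ hyz)
  by_cases hwz : w = z
  · exact Or.inl (hwz ▸ hyz.symm)
  by_contra hc
  push_neg at hc
  exact h y z x w hyz hxy.symm hxz.symm hwx.symm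
    (fun h' => hc.1 h'.symm) (fun h' => hc.2 h'.symm) (Ne.symm hwy) (Ne.symm hwz)

lemma triangle_walk {V : Type} {G : SimpleGraph V} (h : NoPaw G) :
    ∀ {u v : V}, G.Walk u v → (∃ x y, G.Adj u x ∧ G.Adj u y ∧ G.Adj x y) →
      ∃ x y, G.Adj v x ∧ G.Adj v y ∧ G.Adj x y := by
  intro u v w
  induction w with
  | nil => exact id
  | @cons u u' v hadj p ih =>
    intro hu
    apply ih
    obtain ⟨x, y, hux, huy, hxy⟩ := hu
    rcases lemA h hux huy hxy hadj.symm with h' | h'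
    · exact ⟨u, x, hadj.symm, h', hux⟩
    · exact ⟨u, y, hadj.symm, h', huy⟩

lemma no_coP3_aux {V : Type} {G : SimpleGraph V} (h : NoPaw G) {t1 t2 t3 : V}
    (ht12 : G.Adj t1 t2) (ht13 : G.Adj t1 t3) (ht23 : G.Adj t2 t3) :
    ∀ n : ℕ, ∀ a b y : V, G.Adj a b → G.Reachable t1 a → G.Reachable y a →
      G.dist y a ≤ n → ¬G.Adj y a → ¬G.Adj y b → False := by
  intro n
  induction n with
  | zero =>
    intro a b y hab hta hya hd hy1 hy2
    have hy : y = a := (hya.dist_eq_zero_iff).mp (Nat.le_zero.mp hd)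
    exact hy2 (hy ▸ hab)
  | succ n ih =>
    intro a b y hab hta hya hd hy1 hy2
    have hyne : y ≠ a := fun hh => hy2 (hh ▸ hab)
    have hynb : y ≠ b := fun hh => hy1 (hh ▸ hab.symm)
    -- a lies in a triangle
    obtain ⟨x', y', hax, hay, hxy⟩ := triangle_walk h hta.some ⟨t2, t3, ht12, ht13, ht23⟩
    -- common neighbor t of a and b
    obtain hbt | hbt : G.Adj b x' ∨ G.Adj b y' := lemA h hax hay hxy hab.symm
    case' inl => set t := x' with hts
    case' inr => set t := y' with hts
    all_goals {
      have hat : G.Adj a t := by first | exact hax | exact hay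
      -- y is not adjacent to t
      have hyt : ¬ G.Adj y t := fun hyt =>
        h a b t y hab hat hbt hyt.symm (fun h' => hy1 h'.symm) (fun h' => hy2 h'.symm)
          (Ne.symm hyne) (Ne.symm hynb)
      -- shortest walk from y to a
      obtain ⟨p, hp⟩ := hya.exists_walk_length_eq_dist
      have hdpos : G.dist y a ≠ 0 := by
        simp [dist_eq_zero_iff_eq_or_not_reachable, hyne, hya]
      cases p with
      | nil => simp at hp; simp at hdpos
      | @cons _ d _ hyd q =>
        have hqd : G.dist d a ≤ n := by
          have := dist_le q
          have hlen : q.length + 1 = G.dist y a := by simpa using hp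
          omega
        have hdya : d ≠ y := hyd.ne.symm
        by_cases hda : G.Adj d a
        · by_cases hdb : G.Adj d b
          · -- paw (a, b, d, y)
            exact h a b d y hab hda.symm hdb.symm hyd.symm (fun h' => hy1 h'.symm)
              (fun h' => hy2 h'.symm) (Ne.symm hyne) (Ne.symm hynb)
          · -- d adj t by lemA on triangle (a,b,t) with edge d a
            have hdt : G.Adj d t := by
              rcases lemA h hab hat hbt hda with h' | h'
              · exact absurd h' hdb
              · exact h'
            have hynt : y ≠ t := fun hh => hy1 (by rw [hh]; exact hat.symm)
            exact h a t d y hat hda.symm hdt.symm hyd.symm (fun h' => hy1 h'.symm)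
              (fun h' => hyt h'.symm) (Ne.symm hyne) (Ne.symm hynt)
        · by_cases hdb : G.Adj d b
          · have hdt : G.Adj d t := by
              rcases lemA h hab.symm hbt hat hdb with h' | h'
              · exact absurd h' hda
              · exact h'
            have hynt : y ≠ t := fun hh => hy1 (by rw [hh]; exact hat.symm)
            exact h b t d y hbt hdb.symm hdt.symm hyd.symm (fun h' => hy2 h'.symm)
              (fun h' => hyt h'.symm) (Ne.symm hynb) (Ne.symm hynt)
          · exact ih a b d hab hta (q.reachable) hqd hda hdb
    }

lemma noPaw_of_inducedFree {V : Type} {G : SimpleGraph V} (h : InducedFree G paw) :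
    NoPaw G := by
  intro a b c d hab hac hbc hcd had hbd hadne hbdne
  have hda : ¬G.Adj d a := fun h' => had h'.symm
  have hdb : ¬G.Adj d b := fun h' => hbd h'.symm
  have hinj : Function.Injective ![a,b,c,d] := by
    intro i j hij
    fin_cases i <;> fin_cases j <;> simp at hij ⊢ <;>
      first | (exfalso ; revert hij; first
        | exact hab.ne | exact hab.ne'
        | exact hac.ne | exact hac.ne'
        | exact hbc.ne | exact hbc.ne'
        | exact hcd.ne | exact hcd.ne'
        | exact hadne | exact fun hh => hadne hh.symm
        | exact hbdne | exact fun hh => hbdne hh.symm)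
  have hadjf : ∀ i j : Fin 4, paw.Adj i j ↔ G.Adj (![a,b,c,d] i) (![a,b,c,d] j) := by
    intro i j
    fin_cases i <;> fin_cases j <;> simp [paw, fromEdgeSet_adj] <;>
      first
        | exact hab | exact hab.symm | exact hac | exact hac.symm
        | exact hbc | exact hbc.symm | exact hcd | exact hcd.symm
        | exact had | exact hbd | exact hda | exact hdb
  have iso : G.induce (Set.range ![a,b,c,d]) ≃g paw := by
    refine ⟨(Equiv.ofInjective _ hinj).symm, ?_⟩
    intro x y
    obtain ⟨i, rfl⟩ := (Equiv.ofInjective _ hinj).surjective x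
    obtain ⟨j, rfl⟩ := (Equiv.ofInjective _ hinj).surjective y
    simp only [Equiv.symm_apply_apply]
    rw [hadjf i j]
    rfl
  exact (h _).false iso

theorem paw_free_iff_components {V : Type} [Fintype V] (G : SimpleGraph V) :
    InducedFree G paw ↔
      ∀ c : G.ConnectedComponent,
        (G.induce c.supp).CliqueFree 3 ∨ _root_.IsCompleteMultipartite (G.induce c.supp) := by
  classical
  constructor
  · intro hfree c
    have hnp : NoPaw G := noPaw_of_inducedFree hfree
    by_cases hcf : (G.induce c.supp).CliqueFree 3
    · exact Or.inl hcf
    right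
    rw [CliqueFree] at hcf
    push_neg at hcf
    obtain ⟨t, ht⟩ := hcf
    rw [is3Clique_iff] at ht
    obtain ⟨p, q, r, hpq, hpr, hqr, rfl⟩ := ht
    have hpq' : G.Adj ↑p ↑q := hpq
    have hpr' : G.Adj ↑p ↑r := hpr
    have hqr' : G.Adj ↑q ↑r := hqr
    have reach : ∀ u v : c.supp, G.Reachable ↑u ↑v := by
      intro u v
      have hu := (ConnectedComponent.mem_supp_iff c ↑u).mp u.2
      have hv := (ConnectedComponent.mem_supp_iff c ↑v).mp v.2
      exact ConnectedComponent.exact (hu.trans hv.symm)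
    have htrans : ∀ x y z : c.supp, ¬G.Adj ↑x ↑y → ¬G.Adj ↑y ↑z → ¬G.Adj ↑x ↑z := by
      intro x y z hxy hyz hxz
      exact no_coP3_aux hnp hpq' hpr' hqr' (G.dist ↑y ↑x) ↑x ↑z ↑y hxz
        (reach p x) (reach y x) le_rfl (fun h' => hxy h'.symm) hyz
    let st : Setoid c.supp :=
      ⟨fun u v => ¬G.Adj ↑u ↑v,
        fun u => G.irrefl,
        fun {u v} h h' => h h'.symm,
        fun {u v w} h h' => htrans u v w h h'⟩
    refine ⟨Quotient st, Quotient.mk st, fun u v => ?_⟩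
    constructor
    · intro hadj heq
      exact Quotient.exact heq hadj
    · intro hne
      by_contra hadj
      exact hne (Quotient.sound (hadj : ¬G.Adj ↑u ↑v))
  · intro hcomp s
    refine ⟨fun e => ?_⟩
    set v : Fin 4 → V := fun i => ↑(e.symm i) with hv
    have key : ∀ i j, G.Adj (v i) (v j) ↔ paw.Adj i j := fun i j => e.symm.map_rel_iff
    have h01 : G.Adj (v 0) (v 1) := key 0 1 |>.mpr (by simp [paw, fromEdgeSet_adj])
    have h02 : G.Adj (v 0) (v 2) := key 0 2 |>.mpr (by simp [paw, fromEdgeSet_adj])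
    have h12 : G.Adj (v 1) (v 2) := key 1 2 |>.mpr (by simp [paw, fromEdgeSet_adj])
    have h23 : G.Adj (v 2) (v 3) := key 2 3 |>.mpr (by simp [paw, fromEdgeSet_adj])
    have h03 : ¬G.Adj (v 0) (v 3) := fun h => (by simpa [paw, fromEdgeSet_adj] using (key 0 3).mp h)
    have h13 : ¬G.Adj (v 1) (v 3) := fun h => (by simpa [paw, fromEdgeSet_adj] using (key 1 3).mp h)
    set c : G.ConnectedComponent := G.connectedComponentMk (v 2) with hc
    have m0 : v 0 ∈ c.supp := (ConnectedComponent.mem_supp_iff _ _).mpr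
      (ConnectedComponent.sound h02.reachable)
    have m1 : v 1 ∈ c.supp := (ConnectedComponent.mem_supp_iff _ _).mpr
      (ConnectedComponent.sound h12.reachable)
    have m2 : v 2 ∈ c.supp := (ConnectedComponent.mem_supp_iff _ _).mpr rfl
    have m3 : v 3 ∈ c.supp := (ConnectedComponent.mem_supp_iff _ _).mpr
      (ConnectedComponent.sound h23.reachable.symm)
    rcases hcomp c with hcf | ⟨ι, f, hf⟩
    · exact hcf {⟨v 0, m0⟩, ⟨v 1, m1⟩, ⟨v 2, m2⟩}
        (is3Clique_iff.mpr ⟨⟨v 0, m0⟩, ⟨v 1, m1⟩, ⟨v 2, m2⟩, h01, h02, h12, rfl⟩)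
    · have e01 : f ⟨v 0, m0⟩ ≠ f ⟨v 1, m1⟩ := (hf _ _).mp h01
      have e23 : f ⟨v 2, m2⟩ ≠ f ⟨v 3, m3⟩ := (hf _ _).mp h23
      have e03 : f ⟨v 0, m0⟩ = f ⟨v 3, m3⟩ := by
        by_contra hne; exact h03 ((hf _ _).mpr hne)
      have e13 : f ⟨v 1, m1⟩ = f ⟨v 3, m3⟩ := by
        by_contra hne; exact h13 ((hf _ _).mpr hne)
      exact e01 (e03.trans e13.symm)
end

section
/- Let G and H be graphs each with at least one vertex. The join G ∨ H is k-vertex-critical if and only if there exist k_1, k_2 with k_1 + k_2 = k such that G is k_1-vertex-critical and H is k_2-vertex-critical. -/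
open SimpleGraph

section Aux

variable {α β : Type*} {G : SimpleGraph α} {H : SimpleGraph β}

lemma colorable_joinG {n m : ℕ} (hG : G.Colorable n) (hH : H.Colorable m) :
    (joinG G H).Colorable (n + m) := by
  obtain ⟨cG⟩ := hG
  obtain ⟨cH⟩ := hH
  have C : (joinG G H).Coloring (Fin n ⊕ Fin m) :=
    Coloring.mk (Sum.elim (fun a => Sum.inl (cG a)) (fun b => Sum.inr (cH b))) (by
      rintro (a | a) (b | b) hab
      · simp only [Sum.elim_inl, ne_eq, Sum.inl.injEq]
        exact cG.valid hab
      · simp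
      · simp
      · simp only [Sum.elim_inr, ne_eq, Sum.inr.injEq]
        exact cH.valid hab)
  simpa using C.colorable

lemma chromaticNumber_add_le_of_joinG_colorable [Fintype α] [Fintype β] {n : ℕ}
    (h : (joinG G H).Colorable n) :
    G.chromaticNumber + H.chromaticNumber ≤ (n : ℕ∞) := by
  classical
  obtain ⟨C⟩ := h
  set A : Finset (Fin n) := Finset.image (fun a => C (Sum.inl a)) Finset.univ with hA
  set B : Finset (Fin n) := Finset.image (fun b => C (Sum.inr b)) Finset.univ with hB
  have hAB : Disjoint A B := by
    rw [Finset.disjoint_left]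
    rintro c hcA hcB
    simp only [hA, hB, Finset.mem_image, Finset.mem_univ, true_and] at hcA hcB
    obtain ⟨a, ha⟩ := hcA
    obtain ⟨b, hb⟩ := hcB
    exact C.valid (show (joinG G H).Adj (Sum.inl a) (Sum.inr b) from trivial) (ha.trans hb.symm)
  have hGc : G.Colorable A.card := by
    have CG : G.Coloring ↥A :=
      Coloring.mk (fun a => ⟨C (Sum.inl a), by
          simp only [hA, Finset.mem_image, Finset.mem_univ, true_and]; exact ⟨a, rfl⟩⟩)
        (fun {a b} hab he => C.valid (show (joinG G H).Adj (Sum.inl a) (Sum.inl b) from hab)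
          (by simpa using he))
    simpa using CG.colorable
  have hHc : H.Colorable B.card := by
    have CH : H.Coloring ↥B :=
      Coloring.mk (fun b => ⟨C (Sum.inr b), by
          simp only [hB, Finset.mem_image, Finset.mem_univ, true_and]; exact ⟨b, rfl⟩⟩)
        (fun {a b} hab he => C.valid (show (joinG G H).Adj (Sum.inr a) (Sum.inr b) from hab)
          (by simpa using he))
    simpa using CH.colorable
  have hcard : A.card + B.card ≤ n := by
    rw [← Finset.card_union_of_disjoint hAB]
    simpa using Finset.card_le_univ (A ∪ B)
  calc G.chromaticNumber + H.chromaticNumber ≤ (A.card : ℕ∞) + (B.card : ℕ∞) :=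
        add_le_add hGc.chromaticNumber_le hHc.chromaticNumber_le
    _ ≤ (n : ℕ∞) := by exact_mod_cast hcard

lemma chromaticNumber_joinG [Fintype α] [Fintype β] :
    (joinG G H).chromaticNumber = G.chromaticNumber + H.chromaticNumber := by
  have hG := G.colorable_chromaticNumber_of_fintype
  have hH := H.colorable_chromaticNumber_of_fintype
  have hJ := (joinG G H).colorable_chromaticNumber_of_fintype
  have hGne : G.chromaticNumber ≠ ⊤ := chromaticNumber_ne_top_iff_exists.2 ⟨_, hG⟩
  have hHne : H.chromaticNumber ≠ ⊤ := chromaticNumber_ne_top_iff_exists.2 ⟨_, hH⟩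
  have hJne : (joinG G H).chromaticNumber ≠ ⊤ := chromaticNumber_ne_top_iff_exists.2 ⟨_, hJ⟩
  apply le_antisymm
  · have := (colorable_joinG hG hH).chromaticNumber_le
    rwa [Nat.cast_add, ENat.coe_toNat hGne, ENat.coe_toNat hHne] at this
  · have := chromaticNumber_add_le_of_joinG_colorable hJ
    rwa [ENat.coe_toNat hJne] at this

def joinInduceInlIso (v : α) :
    ((joinG G H).induce ({Sum.inl v}ᶜ : Set (α ⊕ β))) ≃g joinG (G.induce ({v}ᶜ : Set α)) H where
  toFun x := match x with
    | ⟨Sum.inl a, h⟩ => Sum.inl ⟨a, by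
        intro he
        exact h (by simp_all)⟩
    | ⟨Sum.inr b, _⟩ => Sum.inr b
  invFun x := match x with
    | Sum.inl a => ⟨Sum.inl a.1, by
        intro he
        exact a.2 (by simpa using he)⟩
    | Sum.inr b => ⟨Sum.inr b, by simp⟩
  left_inv := by rintro ⟨(a | b), h⟩ <;> rfl
  right_inv := by rintro (⟨a, ha⟩ | b) <;> rfl
  map_rel_iff' := by rintro ⟨(a | b), ha⟩ ⟨(c | d), hc⟩ <;> exact Iff.rfl

def joinInduceInrIso (v : β) :
    ((joinG G H).induce ({Sum.inr v}ᶜ : Set (α ⊕ β))) ≃g joinG G (H.induce ({v}ᶜ : Set β)) where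
  toFun x := match x with
    | ⟨Sum.inl a, _⟩ => Sum.inl a
    | ⟨Sum.inr b, h⟩ => Sum.inr ⟨b, by
        intro he
        exact h (by simp_all)⟩
  invFun x := match x with
    | Sum.inl a => ⟨Sum.inl a, by simp⟩
    | Sum.inr b => ⟨Sum.inr b.1, by
        intro he
        exact b.2 (by simpa using he)⟩
  left_inv := by rintro ⟨(a | b), h⟩ <;> rfl
  right_inv := by rintro (a | ⟨b, hb⟩) <;> rfl
  map_rel_iff' := by rintro ⟨(a | b), ha⟩ ⟨(c | d), hc⟩ <;> exact Iff.rfl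

lemma chromaticNumber_eq_of_iso {α' β' : Type*} {G' : SimpleGraph α'} {H' : SimpleGraph β'}
    (f : G' ≃g H') : G'.chromaticNumber = H'.chromaticNumber :=
  le_antisymm (chromaticNumber_mono_of_hom f.toHom)
    (chromaticNumber_mono_of_hom f.symm.toHom)

end Aux

theorem join_vertex_critical_iff {α β : Type} [Fintype α] [Fintype β]
    [Nonempty α] [Nonempty β] (G : SimpleGraph α) (H : SimpleGraph β) (k : ℕ) :
    IsKVertexCritical (joinG G H) k ↔
      ∃ k₁ k₂ : ℕ, k₁ + k₂ = k ∧ IsKVertexCritical G k₁ ∧ IsKVertexCritical H k₂ := by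
  classical
  have hjoin : (joinG G H).chromaticNumber = G.chromaticNumber + H.chromaticNumber :=
    chromaticNumber_joinG
  have hGne : G.chromaticNumber ≠ ⊤ :=
    chromaticNumber_ne_top_iff_exists.2 ⟨_, G.colorable_of_fintype⟩
  have hHne : H.chromaticNumber ≠ ⊤ :=
    chromaticNumber_ne_top_iff_exists.2 ⟨_, H.colorable_of_fintype⟩
  have hindl : ∀ v : α, ((joinG G H).induce ({Sum.inl v}ᶜ : Set (α ⊕ β))).chromaticNumber
      = (G.induce ({v}ᶜ : Set α)).chromaticNumber + H.chromaticNumber := by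
    intro v
    letI : Fintype ↥({v}ᶜ : Set α) := Fintype.ofFinite _
    rw [chromaticNumber_eq_of_iso (joinInduceInlIso v), chromaticNumber_joinG]
  have hindr : ∀ v : β, ((joinG G H).induce ({Sum.inr v}ᶜ : Set (α ⊕ β))).chromaticNumber
      = G.chromaticNumber + (H.induce ({v}ᶜ : Set β)).chromaticNumber := by
    intro v
    letI : Fintype ↥({v}ᶜ : Set β) := Fintype.ofFinite _
    rw [chromaticNumber_eq_of_iso (joinInduceInrIso v), chromaticNumber_joinG]
  constructor
  · rintro ⟨hk, hcrit⟩
    set n₁ := G.chromaticNumber.toNat with hn₁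
    set n₂ := H.chromaticNumber.toNat with hn₂
    have hG1 : G.chromaticNumber = (n₁ : ℕ∞) := (ENat.coe_toNat hGne).symm
    have hH1 : H.chromaticNumber = (n₂ : ℕ∞) := (ENat.coe_toNat hHne).symm
    have hkeq : (k : ℕ∞) = (n₁ : ℕ∞) + (n₂ : ℕ∞) := by rw [← hk, hjoin, hG1, hH1]
    have hk' : k = n₁ + n₂ := by exact_mod_cast hkeq
    refine ⟨n₁, n₂, hk'.symm, ⟨hG1, fun v => ?_⟩, ⟨hH1, fun v => ?_⟩⟩
    · have h := hcrit (Sum.inl v)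
      rw [hindl v, hH1, hkeq] at h
      exact (WithTop.add_lt_add_iff_right (ENat.coe_ne_top _)).1 h
    · have h := hcrit (Sum.inr v)
      rw [hindr v, hG1, hkeq] at h
      exact (WithTop.add_lt_add_iff_left (ENat.coe_ne_top _)).1 h
  · rintro ⟨k₁, k₂, hsum, ⟨hG1', hGc⟩, ⟨hH1', hHc⟩⟩
    have hkcast : (k : ℕ∞) = (k₁ : ℕ∞) + (k₂ : ℕ∞) := by
      rw [← hsum]; push_cast; ring
    constructor
    · rw [hjoin, hG1', hH1', hkcast]
    · rintro (v | v)
      · rw [hindl v, hH1', hkcast]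
        exact (WithTop.add_lt_add_iff_right (ENat.coe_ne_top _)).2 (hGc v)
      · rw [hindr v, hG1', hkcast]
        exact (WithTop.add_lt_add_iff_left (ENat.coe_ne_top _)).2 (hHc v)
end
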